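/- arXiv:1806.03756 — 2 statements merged into one kernel-verified Lean document; each statement's English description precedes it below -/
import Mathlib

section
/- Let h(t) = -(k/p)·t + (1/p)·Σ_{i=1}^p max(|β_i| + t, 0) for fixed β ∈ ℝ^p and integers 1 ≤ k < p. Then the infimum of h over t ∈ ℝ is attained, and the constraint inf_t h(t) ≤ 0 holds if and only if β = 0 and the infimum is attained at t = 0. -/
open Finset

/-- For `h t = -(k/p)·t + (1/p)·∑ i, max (|β i| + t) 0` with `1 ≤ k < p`,
the infimum of `h` over `ℝ` is attained, and `inf h ≤ 0` holds iff `β = 0`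
and the infimum is attained at `t = 0`. -/
theorem stmt0 (p k : ℕ) (hk : 1 ≤ k) (hkp : k < p) (β : Fin p → ℝ) :
    let h : ℝ → ℝ := fun t => -((k : ℝ) / p) * t + (1 / p) * ∑ i, max (|β i| + t) 0
    (∃ t₀ : ℝ, ∀ t : ℝ, h t₀ ≤ h t) ∧
      (sInf (Set.range h) ≤ 0 ↔ β = 0 ∧ ∀ t : ℝ, h 0 ≤ h t) := by
  intro h
  have hp0 : (0:ℝ) < p := by
    have : 0 < p := lt_of_le_of_lt (Nat.zero_le k) hkp
    exact_mod_cast this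
  have hk0 : (0:ℝ) < k := by exact_mod_cast hk
  have hk1 : (1:ℝ) ≤ k := by exact_mod_cast hk
  have hkp' : (k:ℝ) < p := by exact_mod_cast hkp
  set g : ℝ → ℝ := fun t => -(k:ℝ) * t + ∑ i, max (|β i| + t) 0 with hg
  have hrepr : ∀ t, h t = (1/p) * g t := by
    intro t
    show -((k : ℝ) / p) * t + (1 / p) * ∑ i, max (|β i| + t) 0 = _
    simp only [hg]
    ring
  have hsum_nonneg : ∀ t : ℝ, 0 ≤ ∑ i, max (|β i| + t) 0 :=
    fun t => Finset.sum_nonneg fun i _ => le_max_right _ _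
  have hsum_ge : ∀ t : ℝ, (p:ℝ) * t ≤ ∑ i, max (|β i| + t) 0 := by
    intro t
    calc (p:ℝ) * t = ∑ _i : Fin p, t := by simp [mul_comm]
    _ ≤ _ := Finset.sum_le_sum fun i _ =>
        le_max_of_le_left (by linarith [abs_nonneg (β i)])
  set c : ℝ := min ((k:ℝ)) ((p:ℝ) - k) with hc
  have hc0 : 0 < c := lt_min hk0 (by linarith)
  have gcoer : ∀ t : ℝ, c * |t| ≤ g t := by
    intro t
    rcases le_or_gt 0 t with ht | ht
    · rw [abs_of_nonneg ht]
      have h1 : c * t ≤ ((p:ℝ) - k) * t :=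
        mul_le_mul_of_nonneg_right (min_le_right _ _) ht
      have h2 := hsum_ge t
      simp only [hg]
      nlinarith
    · rw [abs_of_neg ht]
      have h1 : c * (-t) ≤ (k:ℝ) * (-t) :=
        mul_le_mul_of_nonneg_right (min_le_left _ _) (by linarith)
      have h2 := hsum_nonneg t
      simp only [hg]
      nlinarith
  have gnonneg : ∀ t : ℝ, 0 ≤ g t := fun t =>
    le_trans (by positivity) (gcoer t)
  have hcont : Continuous g := by
    apply Continuous.add
    · fun_prop
    · exact continuous_finset_sum _ fun i _ =>
        (continuous_const.add continuous_id).max continuous_const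
  -- minimizer of g
  set R : ℝ := g 0 / c with hR
  have hR0 : 0 ≤ R := div_nonneg (gnonneg 0) hc0.le
  obtain ⟨t₀, ht₀mem, ht₀min⟩ :=
    isCompact_Icc.exists_isMinOn (Set.nonempty_Icc.mpr (by linarith : -R ≤ R))
      hcont.continuousOn
  have h0mem : (0:ℝ) ∈ Set.Icc (-R) R := Set.mem_Icc.mpr ⟨by linarith, hR0⟩
  have hmin : ∀ t : ℝ, g t₀ ≤ g t := by
    intro t
    by_cases htm : t ∈ Set.Icc (-R) R
    · exact ht₀min htm
    · have habs : R < |t| := by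
        rw [Set.mem_Icc, not_and_or, not_le, not_le] at htm
        rcases htm with h' | h'
        · exact lt_abs.mpr (Or.inr (by linarith))
        · exact lt_abs.mpr (Or.inl h')
      have h1 : c * R < c * |t| := mul_lt_mul_of_pos_left habs hc0
      have h2 : c * R = g 0 := by
        rw [hR]
        field_simp [hc0.ne']
      have h3 := gcoer t
      have h4 := ht₀min h0mem
      simp only [Set.mem_setOf_eq] at h4 ⊢
      linarith [h4]
  have hmono : ∀ t₁ t₂ : ℝ, g t₁ ≤ g t₂ → h t₁ ≤ h t₂ := by
    intro t₁ t₂ hle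
    rw [hrepr, hrepr]
    exact mul_le_mul_of_nonneg_left hle (by positivity)
  refine ⟨⟨t₀, fun t => hmono _ _ (hmin t)⟩, ?_, ?_⟩
  · -- forward direction
    intro hInf
    have hβ : β = 0 := by
      by_contra hne
      obtain ⟨j, hj⟩ : ∃ j, β j ≠ 0 := by
        by_contra h'
        push_neg at h'
        exact hne (funext fun i => h' i)
      set b := |β j| with hb
      have hb0 : 0 < b := abs_pos.mpr hj
      have hlow : ∀ t : ℝ, b/2 ≤ g t := by
        intro t
        have hsplit : max (b + t) 0 + ((p:ℝ) - 1) * max t 0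
            ≤ ∑ i, max (|β i| + t) 0 := by
          rw [← Finset.add_sum_erase Finset.univ
            (fun i => max (|β i| + t) 0) (Finset.mem_univ j)]
          have hcard : (Finset.univ.erase j).card = p - 1 := by
            rw [Finset.card_erase_of_mem (Finset.mem_univ j), Finset.card_univ,
              Fintype.card_fin]
          have h2 : ((p:ℝ) - 1) * max t 0
              ≤ ∑ i ∈ Finset.univ.erase j, max (|β i| + t) 0 := by
            calc ((p:ℝ) - 1) * max t 0
                = ∑ _i ∈ Finset.univ.erase j, max t 0 := by
                  rw [Finset.sum_const, hcard, nsmul_eq_mul, Nat.cast_sub (by omega : 1 ≤ p)]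
                  norm_num
            _ ≤ _ := Finset.sum_le_sum fun i _ =>
                max_le_max (le_add_of_nonneg_left (abs_nonneg _)) le_rfl
          exact add_le_add le_rfl h2
        simp only [hg]
        rcases le_or_gt 0 t with ht | ht
        · rw [max_eq_left ht, max_eq_left (by linarith)] at hsplit
          nlinarith
        · rcases le_or_gt (-(b/2)) t with ht2 | ht2
          · rw [max_eq_right ht.le, max_eq_left (by linarith)] at hsplit
            nlinarith
          · have hS := hsum_nonneg t
            nlinarith [mul_le_mul_of_nonneg_left ht2.le hk0.le,
              mul_nonneg (by linarith [hk1] : (0:ℝ) ≤ (k:ℝ) - 1) hb0.le]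
      have hlow' : b/(2*p) ≤ sInf (Set.range h) := by
        apply le_csInf ⟨h 0, Set.mem_range_self 0⟩
        rintro y ⟨t, rfl⟩
        rw [hrepr]
        have := mul_le_mul_of_nonneg_left (hlow t) (by positivity : (0:ℝ) ≤ 1/p)
        calc b/(2*p) = (1/p) * (b/2) := by ring
        _ ≤ _ := this
      have : 0 < b/(2*p) := by positivity
      linarith
    subst hβ
    have hg0 : g 0 = 0 := by simp [hg]
    refine ⟨rfl, fun t => hmono _ _ ?_⟩
    rw [hg0]
    exact gnonneg t
  · rintro ⟨hβ, -⟩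
    subst hβ
    have hg0 : h 0 = 0 := by
      rw [hrepr]
      simp [hg]
    have hbdd : BddBelow (Set.range h) := by
      refine ⟨0, ?_⟩
      rintro y ⟨t, rfl⟩
      rw [hrepr]
      exact mul_nonneg (by positivity) (gnonneg t)
    calc sInf (Set.range h) ≤ h 0 := csInf_le hbdd (Set.mem_range_self 0)
    _ = 0 := hg0
end

section
/- Suppose p ≥ k ≥ 1, λ > 0, and let v^G be the objective value of the greedy forward-selection algorithm for sparse ridge regression (which at each of k iterations adds the feature j minimizing −λ(yᵀA_S⁻¹x_j)²/(1 + x_jᵀA_S⁻¹x_j), starting from A_∅ = nλI). Then v* ≤ v^G ≤ ((nλ + θ_k)/(nλ))·(1 − (n²λ²·θ̲)/((nλ + θ₁)(nλ + θ_k)²)·log((p+1)/(p+1−k)))·v*, where v* is the optimal value, θ_s = max_{|S|=s} σ_max(X_S X_Sᵀ), and θ̲ = min_{|T| ≥ p−k+1} σ_min(X_T X_Tᵀ). -/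
open Finset Matrix

/-- `A_S = nλ I_n + ∑_{i ∈ S} x_i x_iᵀ`. -/
noncomputable def ridgeMat (n p : ℕ) (lam : ℝ) (x : Fin p → Fin n → ℝ)
    (S : Finset (Fin p)) : Matrix (Fin n) (Fin n) ℝ :=
  ((n : ℝ) * lam) • (1 : Matrix (Fin n) (Fin n) ℝ) +
    ∑ i ∈ S, vecMulVec (x i) (x i)

/-- `θ_s = max_{|S| = s} σ_max(X_S X_Sᵀ)`, expressed via the Rayleigh quotient
over unit vectors. -/
noncomputable def thetaMax (n p : ℕ) (x : Fin p → Fin n → ℝ) (s : ℕ) : ℝ :=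
  sSup {r : ℝ | ∃ S : Finset (Fin p), S.card = s ∧ ∃ u : Fin n → ℝ,
    (∑ j, u j ^ 2) = 1 ∧ r = u ⬝ᵥ ((∑ i ∈ S, vecMulVec (x i) (x i)) *ᵥ u)}

/-- `θ̲ = min_{|T| ≥ p−k+1} σ_min(X_T X_Tᵀ)`, expressed via the Rayleigh
quotient over unit vectors. -/
noncomputable def thetaLow (n p k : ℕ) (x : Fin p → Fin n → ℝ) : ℝ :=
  sInf {r : ℝ | ∃ T : Finset (Fin p), p - k + 1 ≤ T.card ∧ ∃ u : Fin n → ℝ,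
    (∑ j, u j ^ 2) = 1 ∧ r = u ⬝ᵥ ((∑ i ∈ T, vecMulVec (x i) (x i)) *ᵥ u)}

/-- The optimal value `v* = min {λ yᵀ A_S⁻¹ y : |S| ≤ k}` of sparse ridge
regression. -/
noncomputable def vStar (n p k : ℕ) (lam : ℝ) (x : Fin p → Fin n → ℝ)
    (y : Fin n → ℝ) : ℝ :=
  sInf {v : ℝ | ∃ S : Finset (Fin p), S.card ≤ k ∧
    v = lam * (y ⬝ᵥ ((ridgeMat n p lam x S)⁻¹ *ᵥ y))}

section Helpers

variable {n : ℕ}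


lemma dot_self_eq (u : Fin n → ℝ) : u ⬝ᵥ u = ∑ j, u j ^ 2 := by
  simp [dotProduct, sq]

lemma vmv_mulVec (a b v : Fin n → ℝ) : vecMulVec a b *ᵥ v = (b ⬝ᵥ v) • a := by
  funext i
  simp only [mulVec, dotProduct, vecMulVec_apply, Pi.smul_apply, smul_eq_mul, Finset.sum_mul]
  exact Finset.sum_congr rfl fun j _ => by ring

lemma dot_smul_right (c : ℝ) (u v : Fin n → ℝ) : u ⬝ᵥ (c • v) = c * (u ⬝ᵥ v) := by
  rw [dotProduct_smul, smul_eq_mul]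

lemma mul_vmv (M : Matrix (Fin n) (Fin n) ℝ) (a b : Fin n → ℝ) :
    M * vecMulVec a b = vecMulVec (M *ᵥ a) b := by
  ext i j
  simp only [Matrix.mul_apply, vecMulVec_apply, mulVec, dotProduct, Finset.sum_mul]
  exact Finset.sum_congr rfl fun l _ => by ring

lemma vmv_mul (M : Matrix (Fin n) (Fin n) ℝ) (a b : Fin n → ℝ) :
    vecMulVec a b * M = vecMulVec a (Mᵀ *ᵥ b) := by
  ext i j
  simp only [Matrix.mul_apply, vecMulVec_apply, mulVec, dotProduct, transpose_apply,
    Finset.mul_sum]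
  exact Finset.sum_congr rfl fun l _ => by ring

lemma vmv_mul_vmv (a b c d : Fin n → ℝ) :
    vecMulVec a b * vecMulVec c d = (b ⬝ᵥ c) • vecMulVec a d := by
  ext i j
  simp only [Matrix.mul_apply, vecMulVec_apply, Matrix.smul_apply, smul_eq_mul, dotProduct,
    Finset.sum_mul]
  exact Finset.sum_congr rfl fun l _ => by ring

lemma quad_sum {ι : Type*} (S : Finset ι) (f : ι → Fin n → ℝ) (u v : Fin n → ℝ) :
    u ⬝ᵥ ((∑ i ∈ S, vecMulVec (f i) (f i)) *ᵥ v) = ∑ i ∈ S, (f i ⬝ᵥ u) * (f i ⬝ᵥ v) := by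
  induction S using Finset.cons_induction with
  | empty => simp
  | cons a s ha ih =>
    rw [Finset.sum_cons, add_mulVec, dotProduct_add, ih, vmv_mulVec, dot_smul_right,
      Finset.sum_cons, dotProduct_comm u (f a)]
    ring

lemma herm_transpose {A : Matrix (Fin n) (Fin n) ℝ} (hA : A.IsHermitian) : Aᵀ = A := by
  exact (by simpa using hA : A.IsSymm)

lemma herm_dot {A : Matrix (Fin n) (Fin n) ℝ} (hA : A.IsHermitian) (u v : Fin n → ℝ) :
    u ⬝ᵥ (A *ᵥ v) = v ⬝ᵥ (A *ᵥ u) := by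
  rw [dotProduct_mulVec, ← mulVec_transpose, herm_transpose hA, dotProduct_comm]

variable {p : ℕ} {lam : ℝ} {x : Fin p → Fin n → ℝ}


lemma ridge_quad (S : Finset (Fin p)) (u v : Fin n → ℝ) :
    u ⬝ᵥ (ridgeMat n p lam x S *ᵥ v)
      = ((n : ℝ) * lam) * (u ⬝ᵥ v) + ∑ i ∈ S, (x i ⬝ᵥ u) * (x i ⬝ᵥ v) := by
  rw [ridgeMat, add_mulVec, dotProduct_add, smul_mulVec, one_mulVec, dot_smul_right,
    quad_sum]

lemma ridge_herm (S : Finset (Fin p)) : (ridgeMat n p lam x S).IsHermitian := by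
  show _ᴴ = _
  ext i j
  simp only [ridgeMat, conjTranspose_apply, Matrix.add_apply, Matrix.smul_apply,
    Matrix.sum_apply, vecMulVec_apply, Matrix.one_apply, smul_eq_mul, star_trivial]
  have h1 : (if j = i then (1:ℝ) else 0) = (if i = j then (1:ℝ) else 0) := by
    by_cases h : i = j <;> simp [h, eq_comm]
  rw [h1]
  congr 1
  exact Finset.sum_congr rfl fun l _ => by ring

lemma dot_self_pos {u : Fin n → ℝ} (hu : u ≠ 0) : 0 < u ⬝ᵥ u := by
  rcases Function.ne_iff.mp hu with ⟨j, hj⟩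
  simp only [Pi.zero_apply] at hj
  have hlt : 0 < u j * u j := mul_self_pos.mpr hj
  have : u j * u j ≤ u ⬝ᵥ u := by
    rw [dotProduct]
    exact Finset.single_le_sum (f := fun l => u l * u l)
      (fun l _ => mul_self_nonneg _) (Finset.mem_univ j)
  linarith

lemma ridge_posdef (hn : 1 ≤ n) (hlam : 0 < lam) (S : Finset (Fin p)) :
    (ridgeMat n p lam x S).PosDef := by
  refine Matrix.PosDef.of_dotProduct_mulVec_pos (ridge_herm S) fun u hu => ?_
  rw [star_trivial, ridge_quad]
  have h1 : 0 < u ⬝ᵥ u := dot_self_pos hu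
  have h2 : (0:ℝ) ≤ ∑ i ∈ S, (x i ⬝ᵥ u) * (x i ⬝ᵥ u) :=
    Finset.sum_nonneg fun i _ => mul_self_nonneg _
  have h3 : (0:ℝ) < (n : ℝ) * lam := by
    have : (1:ℝ) ≤ (n:ℝ) := by exact_mod_cast hn
    nlinarith
  nlinarith

lemma psd_nonneg {A : Matrix (Fin n) (Fin n) ℝ} (hA : A.PosSemidef) (u : Fin n → ℝ) :
    0 ≤ u ⬝ᵥ (A *ᵥ u) := by
  have := hA.dotProduct_mulVec_nonneg u
  rwa [star_trivial] at this

lemma psd_cs {A : Matrix (Fin n) (Fin n) ℝ} (hA : A.PosSemidef) (a b : Fin n → ℝ) :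
    (a ⬝ᵥ (A *ᵥ b)) ^ 2 ≤ (a ⬝ᵥ (A *ᵥ a)) * (b ⬝ᵥ (A *ᵥ b)) := by
  have key : ∀ t : ℝ,
      0 ≤ (b ⬝ᵥ (A *ᵥ b)) * (t * t) + (2 * (a ⬝ᵥ (A *ᵥ b))) * t + (a ⬝ᵥ (A *ᵥ a)) := by
    intro t
    have h0 := psd_nonneg hA (a + t • b)
    have hs : b ⬝ᵥ (A *ᵥ a) = a ⬝ᵥ (A *ᵥ b) := herm_dot hA.1 b a
    simp only [mulVec_add, mulVec_smul, dotProduct_add, add_dotProduct, dotProduct_smul,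
      smul_dotProduct, smul_smul, smul_eq_mul] at h0
    rw [hs] at h0
    nlinarith [h0]
  have hd := discrim_le_zero key
  rw [discrim] at hd
  nlinarith [hd]

lemma pd_isUnit_det {A : Matrix (Fin n) (Fin n) ℝ} (hA : A.PosDef) : IsUnit A.det :=
  isUnit_iff_ne_zero.mpr hA.det_pos.ne'

lemma pd_mulVec_inv {A : Matrix (Fin n) (Fin n) ℝ} (hA : A.PosDef) (y : Fin n → ℝ) :
    A *ᵥ (A⁻¹ *ᵥ y) = y := by
  rw [mulVec_mulVec, mul_nonsing_inv _ (pd_isUnit_det hA), one_mulVec]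

/-- Sherman–Morrison, scalar form. -/
lemma sherman_scalar {A : Matrix (Fin n) (Fin n) ℝ} (hA : A.PosDef) (z y : Fin n → ℝ) :
    y ⬝ᵥ ((A + vecMulVec z z)⁻¹ *ᵥ y)
      = y ⬝ᵥ (A⁻¹ *ᵥ y)
        - (y ⬝ᵥ (A⁻¹ *ᵥ z)) ^ 2 / (1 + z ⬝ᵥ (A⁻¹ *ᵥ z)) := by
  set a := A⁻¹ *ᵥ z with ha
  set c := z ⬝ᵥ a with hc
  have hApsd := hA.inv.posSemidef
  have hc0 : 0 ≤ c := psd_nonneg hApsd z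
  have hc1 : (0:ℝ) < 1 + c := by linarith
  have hAinvT : A⁻¹ᵀ = A⁻¹ := herm_transpose hA.inv.isHermitian
  have hinv : (A + vecMulVec z z)⁻¹ = A⁻¹ - (1 + c)⁻¹ • vecMulVec a a := by
    apply inv_eq_right_inv
    have h1 : A * A⁻¹ = 1 := mul_nonsing_inv _ (pd_isUnit_det hA)
    have h2 : A * vecMulVec a a = vecMulVec z a := by
      rw [mul_vmv, pd_mulVec_inv hA]
    have h3 : vecMulVec z z * A⁻¹ = vecMulVec z a := by
      rw [vmv_mul, hAinvT]
    have h4 : vecMulVec z z * vecMulVec a a = c • vecMulVec z a := vmv_mul_vmv z z a a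
    have expand : (A + vecMulVec z z) * (A⁻¹ - (1 + c)⁻¹ • vecMulVec a a)
        = A * A⁻¹ - (1+c)⁻¹ • (A * vecMulVec a a) + vecMulVec z z * A⁻¹
          - (1+c)⁻¹ • (vecMulVec z z * vecMulVec a a) := by
      rw [mul_sub, add_mul, add_mul, Matrix.mul_smul, Matrix.mul_smul]
      abel
    rw [expand, h1, h2, h3, h4, smul_smul]
    have hzero : (1:ℝ) - (1+c)⁻¹ - (1+c)⁻¹ * c = 0 := by field_simp; ring
    calc 1 - (1+c)⁻¹ • vecMulVec z a + vecMulVec z a - ((1+c)⁻¹ * c) • vecMulVec z a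
        = 1 + ((1 - (1+c)⁻¹ - (1+c)⁻¹ * c) • vecMulVec z a) := by
          rw [sub_smul, sub_smul, one_smul]; abel
      _ = 1 := by rw [hzero, zero_smul, add_zero]
  rw [hinv, sub_mulVec, dotProduct_sub, smul_mulVec, dot_smul_right, vmv_mulVec,
    dot_smul_right, dotProduct_comm a y]
  rw [div_eq_mul_inv]
  ring

lemma thetaMax_bddAbove (x : Fin p → Fin n → ℝ) (s : ℕ) :
    BddAbove {r : ℝ | ∃ S : Finset (Fin p), S.card = s ∧ ∃ u : Fin n → ℝ,
      (∑ j, u j ^ 2) = 1 ∧ r = u ⬝ᵥ ((∑ i ∈ S, vecMulVec (x i) (x i)) *ᵥ u)} := by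
  refine ⟨∑ i, x i ⬝ᵥ x i, ?_⟩
  rintro r ⟨S, hS, u, hu, rfl⟩
  rw [quad_sum]
  have hbound : ∀ i ∈ S, (x i ⬝ᵥ u) * (x i ⬝ᵥ u) ≤ x i ⬝ᵥ x i := by
    intro i _
    have hcs := Finset.sum_mul_sq_le_sq_mul_sq Finset.univ (x i) u
    rw [show (∑ j, u j ^ 2) = 1 from hu, mul_one] at hcs
    calc (x i ⬝ᵥ u) * (x i ⬝ᵥ u) = (∑ j, x i j * u j) ^ 2 := by rw [dotProduct]; ring
      _ ≤ ∑ j, x i j ^ 2 := hcs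
      _ = x i ⬝ᵥ x i := (dot_self_eq _).symm
  calc ∑ i ∈ S, (x i ⬝ᵥ u) * (x i ⬝ᵥ u) ≤ ∑ i ∈ S, x i ⬝ᵥ x i := Finset.sum_le_sum hbound
    _ ≤ ∑ i, x i ⬝ᵥ x i := Finset.sum_le_sum_of_subset_of_nonneg (Finset.subset_univ S)
        (fun i _ _ => by rw [dot_self_eq]; exact Finset.sum_nonneg fun j _ => sq_nonneg _)

lemma theta_ub {s : ℕ} (x : Fin p → Fin n → ℝ) (hs : s ≤ p) (S : Finset (Fin p))
    (hcard : S.card ≤ s) (u : Fin n → ℝ) :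
    ∑ i ∈ S, (x i ⬝ᵥ u) ^ 2 ≤ thetaMax n p x s * (∑ j, u j ^ 2) := by
  by_cases hu : u = 0
  · simp [hu]
  · have hc : 0 < ∑ j, u j ^ 2 := by
      have := dot_self_pos hu; rwa [dot_self_eq] at this
    set c := ∑ j, u j ^ 2 with hcdef
    have hsqrt : 0 < Real.sqrt c := Real.sqrt_pos.mpr hc
    set u' : Fin n → ℝ := fun j => u j / Real.sqrt c with hu'
    have hsq : Real.sqrt c ^ 2 = c := Real.sq_sqrt hc.le
    have hunit : (∑ j, u' j ^ 2) = 1 := by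
      simp only [hu', div_pow]
      rw [← Finset.sum_div, ← hcdef, hsq, div_self hc.ne']
    obtain ⟨S', hSS', hS'univ, hS'card⟩ := Finset.exists_subsuperset_card_eq (Finset.subset_univ S)
      hcard (by rw [Finset.card_univ, Fintype.card_fin]; exact hs)
    have hmem : (∑ i ∈ S', (x i ⬝ᵥ u') ^ 2) ∈ {r : ℝ | ∃ S : Finset (Fin p), S.card = s ∧
        ∃ u : Fin n → ℝ, (∑ j, u j ^ 2) = 1 ∧
          r = u ⬝ᵥ ((∑ i ∈ S, vecMulVec (x i) (x i)) *ᵥ u)} :=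
      ⟨S', hS'card, u', hunit, by
        rw [quad_sum]; exact Finset.sum_congr rfl fun i _ => pow_two _⟩
    have hle : (∑ i ∈ S', (x i ⬝ᵥ u') ^ 2) ≤ thetaMax n p x s :=
      le_csSup (thetaMax_bddAbove x s) hmem
    have hdot : ∀ i, (x i ⬝ᵥ u) ^ 2 = c * (x i ⬝ᵥ u') ^ 2 := by
      intro i
      have h1 : x i ⬝ᵥ u' = (x i ⬝ᵥ u) / Real.sqrt c := by
        rw [dotProduct, dotProduct, Finset.sum_div]
        exact Finset.sum_congr rfl fun j _ => by simp only [hu']; ring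
      rw [h1, div_pow, hsq]
      field_simp
    calc ∑ i ∈ S, (x i ⬝ᵥ u) ^ 2 ≤ ∑ i ∈ S', (x i ⬝ᵥ u) ^ 2 :=
          Finset.sum_le_sum_of_subset_of_nonneg hSS' (fun i _ _ => sq_nonneg _)
      _ = c * ∑ i ∈ S', (x i ⬝ᵥ u') ^ 2 := by
          rw [Finset.mul_sum]; exact Finset.sum_congr rfl fun i _ => hdot i
      _ ≤ c * thetaMax n p x s := by
          exact mul_le_mul_of_nonneg_left hle hc.le
      _ = thetaMax n p x s * c := mul_comm _ _

lemma sum_single_sq (hn : 0 < n) :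
    (∑ j, ((Pi.single (⟨0, hn⟩ : Fin n) (1:ℝ) : Fin n → ℝ)) j ^ 2) = 1 := by
  rw [Finset.sum_eq_single (⟨0, hn⟩ : Fin n)]
  · simp
  · intro b _ hb; simp [Pi.single_apply, hb]
  · intro h; exact absurd (Finset.mem_univ _) h

lemma thetaMax_nonneg {s : ℕ} (x : Fin p → Fin n → ℝ) (hn : 0 < n) (hs : s ≤ p) :
    0 ≤ thetaMax n p x s := by
  have hb := theta_ub x hs ∅ (by simp) ((Pi.single (⟨0, hn⟩ : Fin n) (1:ℝ) : Fin n → ℝ))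
  rw [sum_single_sq hn, mul_one] at hb
  simpa using hb

lemma thetaLow_bddBelow (x : Fin p → Fin n → ℝ) (k : ℕ) :
    BddBelow {r : ℝ | ∃ T : Finset (Fin p), p - k + 1 ≤ T.card ∧ ∃ u : Fin n → ℝ,
      (∑ j, u j ^ 2) = 1 ∧ r = u ⬝ᵥ ((∑ i ∈ T, vecMulVec (x i) (x i)) *ᵥ u)} := by
  refine ⟨0, ?_⟩
  rintro r ⟨T, hT, u, hu, rfl⟩
  rw [quad_sum]
  exact Finset.sum_nonneg fun i _ => mul_self_nonneg _

lemma thetaLow_nonneg {k : ℕ} (x : Fin p → Fin n → ℝ) (hn : 0 < n) (hk : 1 ≤ k)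
    (hkp : k ≤ p) : 0 ≤ thetaLow n p k x := by
  apply le_csInf
  · refine ⟨_, ⟨Finset.univ, ?_, (Pi.single (⟨0, hn⟩ : Fin n) (1:ℝ) : Fin n → ℝ), sum_single_sq hn, rfl⟩⟩
    rw [Finset.card_univ, Fintype.card_fin]
    omega
  · rintro r ⟨T, hT, u, hu, rfl⟩
    rw [quad_sum]
    exact Finset.sum_nonneg fun i _ => mul_self_nonneg _

lemma theta_lb {k : ℕ} (x : Fin p → Fin n → ℝ) (T : Finset (Fin p))
    (hT : p - k + 1 ≤ T.card) (w : Fin n → ℝ) :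
    thetaLow n p k x * (∑ j, w j ^ 2) ≤ ∑ i ∈ T, (x i ⬝ᵥ w) ^ 2 := by
  by_cases hw : w = 0
  · simp [hw]
  · have hc : 0 < ∑ j, w j ^ 2 := by
      have := dot_self_pos hw; rwa [dot_self_eq] at this
    set c := ∑ j, w j ^ 2 with hcdef
    have hsqrt : 0 < Real.sqrt c := Real.sqrt_pos.mpr hc
    set u' : Fin n → ℝ := fun j => w j / Real.sqrt c with hu'
    have hsq : Real.sqrt c ^ 2 = c := Real.sq_sqrt hc.le
    have hunit : (∑ j, u' j ^ 2) = 1 := by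
      simp only [hu', div_pow]
      rw [← Finset.sum_div, ← hcdef, hsq, div_self hc.ne']
    have hmem : (∑ i ∈ T, (x i ⬝ᵥ u') ^ 2) ∈ {r : ℝ | ∃ T : Finset (Fin p),
        p - k + 1 ≤ T.card ∧ ∃ u : Fin n → ℝ, (∑ j, u j ^ 2) = 1 ∧
          r = u ⬝ᵥ ((∑ i ∈ T, vecMulVec (x i) (x i)) *ᵥ u)} :=
      ⟨T, hT, u', hunit, by
        rw [quad_sum]; exact Finset.sum_congr rfl fun i _ => pow_two _⟩
    have hle : thetaLow n p k x ≤ ∑ i ∈ T, (x i ⬝ᵥ u') ^ 2 :=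
      csInf_le (thetaLow_bddBelow x k) hmem
    have hdot : ∀ i, (x i ⬝ᵥ w) ^ 2 = c * (x i ⬝ᵥ u') ^ 2 := by
      intro i
      have h1 : x i ⬝ᵥ u' = (x i ⬝ᵥ w) / Real.sqrt c := by
        rw [dotProduct, dotProduct, Finset.sum_div]
        exact Finset.sum_congr rfl fun j _ => by simp only [hu']; ring
      rw [h1, div_pow, hsq]
      field_simp
    calc thetaLow n p k x * c ≤ (∑ i ∈ T, (x i ⬝ᵥ u') ^ 2) * c :=
          mul_le_mul_of_nonneg_right hle hc.le
      _ = ∑ i ∈ T, (x i ⬝ᵥ w) ^ 2 := by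
          rw [Finset.sum_mul]
          exact Finset.sum_congr rfl fun i _ => by rw [hdot i]; ring

lemma dot_cs (u w : Fin n → ℝ) : (u ⬝ᵥ w) ^ 2 ≤ (u ⬝ᵥ u) * (w ⬝ᵥ w) := by
  have := Finset.sum_mul_sq_le_sq_mul_sq Finset.univ u w
  rw [dot_self_eq u, dot_self_eq w, dotProduct]
  exact this

lemma ridge_quad_ub {k : ℕ} (hn : 0 < n) (hkp : k ≤ p) (S : Finset (Fin p))
    (hcard : S.card ≤ k) (u : Fin n → ℝ) :
    u ⬝ᵥ (ridgeMat n p lam x S *ᵥ u)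
      ≤ ((n:ℝ) * lam + thetaMax n p x k) * (u ⬝ᵥ u) := by
  rw [ridge_quad]
  have h1 : ∑ i ∈ S, (x i ⬝ᵥ u) * (x i ⬝ᵥ u) ≤ thetaMax n p x k * (u ⬝ᵥ u) := by
    rw [dot_self_eq u]
    calc ∑ i ∈ S, (x i ⬝ᵥ u) * (x i ⬝ᵥ u) = ∑ i ∈ S, (x i ⬝ᵥ u) ^ 2 :=
          Finset.sum_congr rfl fun i _ => (pow_two _).symm
      _ ≤ thetaMax n p x k * (∑ j, u j ^ 2) := theta_ub x hkp S hcard u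
  linarith

lemma inv_quad_upper (hn : 0 < n) (hlam : 0 < lam) (S : Finset (Fin p)) (u : Fin n → ℝ) :
    ((n:ℝ) * lam) * (u ⬝ᵥ ((ridgeMat n p lam x S)⁻¹ *ᵥ u)) ≤ u ⬝ᵥ u := by
  have hA : (ridgeMat n p lam x S).PosDef := ridge_posdef hn hlam S
  set A := ridgeMat n p lam x S with hAdef
  set w : Fin n → ℝ := A⁻¹ *ᵥ u with hw
  have hs0 : 0 ≤ u ⬝ᵥ w := psd_nonneg hA.inv.posSemidef u
  have hd0 : 0 ≤ u ⬝ᵥ u := by rw [dot_self_eq]; exact Finset.sum_nonneg fun _ _ => sq_nonneg _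
  have he0 : 0 ≤ w ⬝ᵥ w := by rw [dot_self_eq]; exact Finset.sum_nonneg fun _ _ => sq_nonneg _
  have hν : (0:ℝ) < (n:ℝ) * lam := by
    have : (1:ℝ) ≤ (n:ℝ) := by exact_mod_cast hn
    nlinarith
  have h2 : ((n:ℝ) * lam) * (w ⬝ᵥ w) ≤ u ⬝ᵥ w := by
    have hq : w ⬝ᵥ (A *ᵥ w) = w ⬝ᵥ u := by rw [hw, pd_mulVec_inv hA]
    have hq2 : ((n:ℝ) * lam) * (w ⬝ᵥ w) ≤ w ⬝ᵥ (A *ᵥ w) := by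
      rw [hAdef, ridge_quad]
      have : (0:ℝ) ≤ ∑ i ∈ S, (x i ⬝ᵥ w) * (x i ⬝ᵥ w) :=
        Finset.sum_nonneg fun i _ => mul_self_nonneg _
      linarith
    rw [hq, dotProduct_comm w u] at hq2
    exact hq2
  have h3 : (u ⬝ᵥ w) ^ 2 ≤ (u ⬝ᵥ u) * (w ⬝ᵥ w) := dot_cs u w
  rcases eq_or_lt_of_le hs0 with h | h
  · rw [← h]; simpa using hd0
  · have key : (((n:ℝ) * lam) * (u ⬝ᵥ w)) * (u ⬝ᵥ w) ≤ (u ⬝ᵥ u) * (u ⬝ᵥ w) := by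
      calc (((n:ℝ) * lam) * (u ⬝ᵥ w)) * (u ⬝ᵥ w) = ((n:ℝ)*lam) * (u ⬝ᵥ w)^2 := by ring
        _ ≤ ((n:ℝ)*lam) * ((u ⬝ᵥ u) * (w ⬝ᵥ w)) := by
            exact mul_le_mul_of_nonneg_left h3 hν.le
        _ = (u ⬝ᵥ u) * (((n:ℝ)*lam) * (w ⬝ᵥ w)) := by ring
        _ ≤ (u ⬝ᵥ u) * (u ⬝ᵥ w) := mul_le_mul_of_nonneg_left h2 hd0
    exact le_of_mul_le_mul_right key h

lemma inv_quad_lower {k : ℕ} (hn : 0 < n) (hlam : 0 < lam) (hkp : k ≤ p)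
    (S : Finset (Fin p)) (hcard : S.card ≤ k) (y : Fin n → ℝ) :
    y ⬝ᵥ y ≤ ((n:ℝ) * lam + thetaMax n p x k) * (y ⬝ᵥ ((ridgeMat n p lam x S)⁻¹ *ᵥ y)) := by
  have hA : (ridgeMat n p lam x S).PosDef := ridge_posdef hn hlam S
  set A := ridgeMat n p lam x S with hAdef
  set w : Fin n → ℝ := A⁻¹ *ᵥ y with hw
  have hs0 : 0 ≤ y ⬝ᵥ w := psd_nonneg hA.inv.posSemidef y
  have hd0 : 0 ≤ y ⬝ᵥ y := by rw [dot_self_eq]; exact Finset.sum_nonneg fun _ _ => sq_nonneg _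
  have hν : (0:ℝ) < (n:ℝ) * lam := by
    have : (1:ℝ) ≤ (n:ℝ) := by exact_mod_cast hn
    nlinarith
  have hθ : 0 ≤ thetaMax n p x k := thetaMax_nonneg x hn hkp
  have hM : (0:ℝ) < (n:ℝ) * lam + thetaMax n p x k := by linarith
  have hcs : (w ⬝ᵥ (A *ᵥ y)) ^ 2 ≤ (w ⬝ᵥ (A *ᵥ w)) * (y ⬝ᵥ (A *ᵥ y)) :=
    psd_cs hA.posSemidef w y
  have hAw : A *ᵥ w = y := pd_mulVec_inv hA y
  have e1 : w ⬝ᵥ (A *ᵥ y) = y ⬝ᵥ y := by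
    rw [herm_dot hA.isHermitian w y, hAw]
  have e2 : w ⬝ᵥ (A *ᵥ w) = y ⬝ᵥ w := by rw [hAw, dotProduct_comm]
  have e3 : y ⬝ᵥ (A *ᵥ y) ≤ ((n:ℝ) * lam + thetaMax n p x k) * (y ⬝ᵥ y) :=
    ridge_quad_ub hn hkp S hcard y
  rw [e1, e2] at hcs
  rcases eq_or_lt_of_le hd0 with h | h
  · rw [← h]; positivity
  · have key : (y ⬝ᵥ y) * (y ⬝ᵥ y)
        ≤ (((n:ℝ) * lam + thetaMax n p x k) * (y ⬝ᵥ w)) * (y ⬝ᵥ y) := by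
      calc (y ⬝ᵥ y) * (y ⬝ᵥ y) = (y ⬝ᵥ y) ^ 2 := by ring
        _ ≤ (y ⬝ᵥ w) * (y ⬝ᵥ (A *ᵥ y)) := hcs
        _ ≤ (y ⬝ᵥ w) * (((n:ℝ) * lam + thetaMax n p x k) * (y ⬝ᵥ y)) :=
            mul_le_mul_of_nonneg_left e3 hs0
        _ = (((n:ℝ) * lam + thetaMax n p x k) * (y ⬝ᵥ w)) * (y ⬝ᵥ y) := by ring
    exact le_of_mul_le_mul_right key h

end Helpers

set_option maxHeartbeats 1000000 in
/-- Performance guarantee of the greedy forward-selection algorithm for sparse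
ridge regression: `v* ≤ v^G ≤ ((nλ+θ_k)/(nλ))·(1 − (n²λ²θ̲)/((nλ+θ₁)(nλ+θ_k)²)
· log((p+1)/(p+1−k)))·v*`. -/
theorem stmt14 (n p k : ℕ) (hn : 1 ≤ n) (hk : 1 ≤ k) (hkp : k ≤ p)
    (x : Fin p → Fin n → ℝ) (y : Fin n → ℝ) (lam : ℝ) (hlam : 0 < lam)
    (S : ℕ → Finset (Fin p)) (hS0 : S 0 = ∅)
    (hstep : ∀ t < k, ∃ j ∉ S t, S (t + 1) = insert j (S t) ∧
      ∀ j' ∉ S t,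
        -(lam * (y ⬝ᵥ ((ridgeMat n p lam x (S t))⁻¹ *ᵥ x j)) ^ 2 /
            (1 + x j ⬝ᵥ ((ridgeMat n p lam x (S t))⁻¹ *ᵥ x j))) ≤
        -(lam * (y ⬝ᵥ ((ridgeMat n p lam x (S t))⁻¹ *ᵥ x j')) ^ 2 /
            (1 + x j' ⬝ᵥ ((ridgeMat n p lam x (S t))⁻¹ *ᵥ x j'))))
    (vG : ℝ) (hvG : vG = lam * (y ⬝ᵥ ((ridgeMat n p lam x (S k))⁻¹ *ᵥ y))) :
    vStar n p k lam x y ≤ vG ∧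
      vG ≤ (((n : ℝ) * lam + thetaMax n p x k) / ((n : ℝ) * lam)) *
        (1 - ((n : ℝ) ^ 2 * lam ^ 2 * thetaLow n p k x) /
            (((n : ℝ) * lam + thetaMax n p x 1) *
              ((n : ℝ) * lam + thetaMax n p x k) ^ 2) *
          Real.log (((p : ℝ) + 1) / ((p : ℝ) + 1 - k))) *
        vStar n p k lam x y := by
  have hn0 : 0 < n := hn
  have hp1 : 1 ≤ p := le_trans hk hkp
  set ν : ℝ := (n:ℝ) * lam with hνdef
  have hν : 0 < ν := by
    have h1 : (1:ℝ) ≤ (n:ℝ) := by exact_mod_cast hn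
    rw [hνdef]; nlinarith
  set θk := thetaMax n p x k with hθk
  set θ1 := thetaMax n p x 1 with hθ1
  set θl := thetaLow n p k x with hθl
  have hθk0 : 0 ≤ θk := thetaMax_nonneg x hn0 hkp
  have hθ10 : 0 ≤ θ1 := thetaMax_nonneg x hn0 hp1
  have hθl0 : 0 ≤ θl := thetaLow_nonneg x hn0 hk hkp
  have hMk : (0:ℝ) < ν + θk := by linarith
  have hM1 : (0:ℝ) < ν + θ1 := by linarith
  set L : ℝ := Real.log (((p : ℝ) + 1) / ((p : ℝ) + 1 - k)) with hL
  set f : ℕ → ℝ := fun t => lam * (y ⬝ᵥ ((ridgeMat n p lam x (S t))⁻¹ *ᵥ y)) with hf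
  have hfdef : ∀ t, f t = lam * (y ⬝ᵥ ((ridgeMat n p lam x (S t))⁻¹ *ᵥ y)) := fun _ => rfl
  set V : Set ℝ := {v : ℝ | ∃ S : Finset (Fin p), S.card ≤ k ∧
    v = lam * (y ⬝ᵥ ((ridgeMat n p lam x S)⁻¹ *ᵥ y))} with hV
  have hvS : vStar n p k lam x y = sInf V := rfl
  have hcard : ∀ t, t ≤ k → (S t).card = t := by
    intro t
    induction t with
    | zero => intro _; rw [hS0]; simp
    | succ t ih =>
      intro h
      obtain ⟨j, hj, hins, _⟩ := hstep t (by omega)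
      rw [hins, Finset.card_insert_of_notMem hj, ih (by omega)]
  have hmemV : ∀ t, t ≤ k → f t ∈ V := fun t ht => ⟨S t, by rw [hcard t ht]; exact ht, rfl⟩
  have hydot : (0:ℝ) ≤ y ⬝ᵥ y := by
    rw [dot_self_eq]; exact Finset.sum_nonneg fun _ _ => sq_nonneg _
  have hVlb : ∀ v ∈ V, lam * (y ⬝ᵥ y) / (ν + θk) ≤ v := by
    rintro v ⟨S', hS', rfl⟩
    have h := inv_quad_lower (x := x) hn0 hlam hkp S' hS' y
    rw [← hθk, ← hνdef] at h
    rw [div_le_iff₀ hMk]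
    nlinarith [mul_le_mul_of_nonneg_left h hlam.le]
  have hlow0 : (0:ℝ) ≤ lam * (y ⬝ᵥ y) / (ν + θk) := by positivity
  have hVne : V.Nonempty := ⟨f 0, hmemV 0 (by omega)⟩
  have hVbdd : BddBelow V := ⟨lam * (y ⬝ᵥ y) / (ν + θk), hVlb⟩
  have hvlb : lam * (y ⬝ᵥ y) / (ν + θk) ≤ sInf V := le_csInf hVne hVlb
  have hv0 : 0 ≤ sInf V := le_trans hlow0 hvlb
  have hstar_le : sInf V ≤ vG := by
    rw [hvG]; exact csInf_le hVbdd (hmemV k le_rfl)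
  rw [hvS]
  refine ⟨hstar_le, ?_⟩
  set cc : ℝ := ν * θl / ((ν + θ1) * (ν + θk)) with hcc
  have hcc0 : 0 ≤ cc := by positivity
  -- per-step inequality
  have hstepbd : ∀ t, t < k → f (t+1) ≤ f t - cc * sInf V / ((p:ℝ) - t) := by
    intro t ht
    obtain ⟨j, hj, hins, hmax⟩ := hstep t ht
    set A := ridgeMat n p lam x (S t) with hAdef
    have hA : A.PosDef := ridge_posdef hn0 hlam (S t)
    set w : Fin n → ℝ := A⁻¹ *ᵥ y with hw
    have hQ : ∀ j', y ⬝ᵥ (A⁻¹ *ᵥ x j') = x j' ⬝ᵥ w := fun j' =>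
      herm_dot hA.inv.isHermitian y (x j')
    set D : Fin p → ℝ :=
      fun j' => lam * (x j' ⬝ᵥ w) ^ 2 / (1 + x j' ⬝ᵥ (A⁻¹ *ᵥ x j')) with hD
    have hr0 : ∀ j', 0 ≤ x j' ⬝ᵥ (A⁻¹ *ᵥ x j') := fun j' =>
      psd_nonneg hA.inv.posSemidef (x j')
    have hD0 : ∀ j', 0 ≤ D j' := fun j' =>
      div_nonneg (mul_nonneg hlam.le (sq_nonneg _)) (by linarith [hr0 j'])
    have hmax' : ∀ j' ∉ S t, D j' ≤ D j := by
      intro j' hj'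
      have h := hmax j' hj'
      rw [hQ j, hQ j'] at h
      simp only [hD]
      linarith
    -- Sherman–Morrison
    have hridge : ridgeMat n p lam x (S (t+1)) = A + vecMulVec (x j) (x j) := by
      rw [hins, hAdef]
      show ridgeMat n p lam x (insert j (S t)) = _
      rw [ridgeMat, ridgeMat, Finset.sum_insert hj]
      abel
    have hSM : f (t+1) = f t - D j := by
      rw [hfdef (t+1), hfdef t, hridge, ← hAdef, sherman_scalar hA (x j) y, hQ j]
      simp only [hD]
      ring
    -- complement set
    set T : Finset (Fin p) := Finset.univ \ S t with hT
    have hTcard : T.card = p - t := by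
      rw [hT, Finset.card_sdiff_of_subset (Finset.subset_univ _), Finset.card_univ, Fintype.card_fin,
        hcard t ht.le]
    have htp : t < p := lt_of_lt_of_le ht hkp
    have hPpos : (0:ℝ) < (p:ℝ) - t := by
      have : (t:ℝ) < (p:ℝ) := by exact_mod_cast htp
      linarith
    have hcast : ((p - t : ℕ) : ℝ) = (p:ℝ) - t := by
      have := Nat.cast_sub htp.le (R := ℝ); exact this
    -- min ≥ average
    have hsum_le : (∑ j' ∈ T, D j') ≤ ((p:ℝ) - t) * D j := by
      have h := Finset.sum_le_card_nsmul T D (D j)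
        (fun j' hj' => hmax' j' (by rw [hT, Finset.mem_sdiff] at hj'; exact hj'.2))
      rw [hTcard] at h
      rw [← hcast]
      simpa [nsmul_eq_mul] using h
    -- per-term lower bound
    have hterm : ∀ j' ∈ T, ν * (lam * (x j' ⬝ᵥ w) ^ 2) ≤ D j' * (ν + θ1) := by
      intro j' _
      have hR := hr0 j'
      have hxx0 : (0:ℝ) ≤ x j' ⬝ᵥ x j' := by
        rw [dot_self_eq]; exact Finset.sum_nonneg fun _ _ => sq_nonneg _
      have hx2 : x j' ⬝ᵥ x j' ≤ θ1 := by
        have h1 := theta_ub (x := x) hp1 {j'} (by simp) (x j')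
        rw [← hθ1, Finset.sum_singleton, ← dot_self_eq] at h1
        rcases eq_or_lt_of_le hxx0 with h | h
        · rw [← h]; exact hθ10
        · nlinarith [h1]
      have hiq := inv_quad_upper (x := x) (lam := lam) hn0 hlam (S t) (x j')
      rw [← hAdef, ← hνdef] at hiq
      have hνR : ν * (x j' ⬝ᵥ (A⁻¹ *ᵥ x j')) ≤ θ1 := le_trans hiq hx2
      have h1R : (0:ℝ) < 1 + x j' ⬝ᵥ (A⁻¹ *ᵥ x j') := by linarith
      have hcancel : D j' * (1 + x j' ⬝ᵥ (A⁻¹ *ᵥ x j')) = lam * (x j' ⬝ᵥ w) ^ 2 := by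
        simp only [hD]
        exact div_mul_cancel₀ _ h1R.ne'
      calc ν * (lam * (x j' ⬝ᵥ w) ^ 2)
          = D j' * (ν * (1 + x j' ⬝ᵥ (A⁻¹ *ᵥ x j'))) := by rw [← hcancel]; ring
        _ ≤ D j' * (ν + θ1) := by
            apply mul_le_mul_of_nonneg_left _ (hD0 j')
            have : ν * (1 + x j' ⬝ᵥ (A⁻¹ *ᵥ x j')) = ν + ν * (x j' ⬝ᵥ (A⁻¹ *ᵥ x j')) := by
              ring
            linarith [hνR]
    have hsum1 : ν * lam * (∑ j' ∈ T, (x j' ⬝ᵥ w) ^ 2) ≤ (∑ j' ∈ T, D j') * (ν + θ1) := by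
      have h := Finset.sum_le_sum hterm
      calc ν * lam * (∑ j' ∈ T, (x j' ⬝ᵥ w) ^ 2)
          = ∑ j' ∈ T, ν * (lam * (x j' ⬝ᵥ w) ^ 2) := by
            rw [Finset.mul_sum]; exact Finset.sum_congr rfl fun _ _ => by ring
        _ ≤ ∑ j' ∈ T, D j' * (ν + θ1) := h
        _ = (∑ j' ∈ T, D j') * (ν + θ1) := by rw [Finset.sum_mul]
    -- spectral lower bound
    have hTk : p - k + 1 ≤ T.card := by rw [hTcard]; omega
    have hW : θl * (w ⬝ᵥ w) ≤ ∑ j' ∈ T, (x j' ⬝ᵥ w) ^ 2 := by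
      have := theta_lb (x := x) T hTk w
      rwa [← hθl, ← dot_self_eq] at this
    -- w norm lower bound
    have hs0 : 0 ≤ y ⬝ᵥ w := psd_nonneg hA.inv.posSemidef y
    have hW0 : 0 ≤ w ⬝ᵥ w := by
      rw [dot_self_eq]; exact Finset.sum_nonneg fun _ _ => sq_nonneg _
    have hwn : y ⬝ᵥ w ≤ (ν + θk) * (w ⬝ᵥ w) := by
      have hAw : A *ᵥ w = y := pd_mulVec_inv hA y
      have h1 : w ⬝ᵥ (A *ᵥ w) = y ⬝ᵥ w := by rw [hAw, dotProduct_comm]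
      have h2 := ridge_quad_ub (x := x) (lam := lam) hn0 hkp (S t)
        (by rw [hcard t ht.le]; omega) w
      rw [← hAdef, ← hνdef, ← hθk, h1] at h2
      exact h2
    -- optimal value bound
    have hft : sInf V ≤ lam * (y ⬝ᵥ w) := by
      have := csInf_le hVbdd (hmemV t ht.le)
      rwa [hfdef t, ← hAdef, ← hw] at this
    -- combine
    have hchain : ν * θl * sInf V ≤ (ν + θk) * (((p:ℝ) - t) * D j * (ν + θ1)) := by
      have G4 : ν * θl * sInf V ≤ ν * θl * (lam * (y ⬝ᵥ w)) :=
        mul_le_mul_of_nonneg_left hft (by positivity)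
      have G3 : ν * lam * (θl * (y ⬝ᵥ w)) ≤ ν * lam * (θl * ((ν + θk) * (w ⬝ᵥ w))) := by
        apply mul_le_mul_of_nonneg_left _ (by positivity)
        exact mul_le_mul_of_nonneg_left hwn hθl0
      have G1 : (ν + θk) * (ν * lam * (θl * (w ⬝ᵥ w)))
          ≤ (ν + θk) * (ν * lam * (∑ j' ∈ T, (x j' ⬝ᵥ w) ^ 2)) := by
        apply mul_le_mul_of_nonneg_left _ hMk.le
        exact mul_le_mul_of_nonneg_left hW (by positivity)
      have G2 : (ν + θk) * (ν * lam * (∑ j' ∈ T, (x j' ⬝ᵥ w) ^ 2))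
          ≤ (ν + θk) * ((∑ j' ∈ T, D j') * (ν + θ1)) :=
        mul_le_mul_of_nonneg_left hsum1 hMk.le
      have G5 : (ν + θk) * ((∑ j' ∈ T, D j') * (ν + θ1))
          ≤ (ν + θk) * (((p:ℝ) - t) * D j * (ν + θ1)) := by
        apply mul_le_mul_of_nonneg_left _ hMk.le
        apply mul_le_mul_of_nonneg_right _ hM1.le
        exact hsum_le
      calc ν * θl * sInf V ≤ ν * θl * (lam * (y ⬝ᵥ w)) := G4
        _ = ν * lam * (θl * (y ⬝ᵥ w)) := by ring
        _ ≤ ν * lam * (θl * ((ν + θk) * (w ⬝ᵥ w))) := G3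
        _ = (ν + θk) * (ν * lam * (θl * (w ⬝ᵥ w))) := by ring
        _ ≤ (ν + θk) * (ν * lam * (∑ j' ∈ T, (x j' ⬝ᵥ w) ^ 2)) := G1
        _ ≤ (ν + θk) * ((∑ j' ∈ T, D j') * (ν + θ1)) := G2
        _ ≤ (ν + θk) * (((p:ℝ) - t) * D j * (ν + θ1)) := G5
    have hfinal : cc * sInf V / ((p:ℝ) - t) ≤ D j := by
      rw [div_le_iff₀ hPpos, hcc, div_mul_eq_mul_div, div_le_iff₀ (by positivity)]
      calc ν * θl * sInf V ≤ (ν + θk) * (((p:ℝ) - t) * D j * (ν + θ1)) := hchain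
        _ = D j * ((p:ℝ) - t) * ((ν + θ1) * (ν + θk)) := by ring
    rw [hSM]
    linarith [hfinal]
  -- telescoping
  have hsum : f 0 - f k = ∑ t ∈ Finset.range k, (f t - f (t+1)) :=
    (Finset.sum_range_sub' f k).symm
  have hsum_ge : cc * sInf V * (∑ t ∈ Finset.range k, 1 / ((p:ℝ) - t)) ≤ f 0 - f k := by
    rw [hsum, Finset.mul_sum]
    apply Finset.sum_le_sum
    intro t ht
    rw [Finset.mem_range] at ht
    have := hstepbd t ht
    have heq : cc * sInf V * (1 / ((p:ℝ) - t)) = cc * sInf V / ((p:ℝ) - t) := by ring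
    rw [heq]
    linarith
  -- logarithm bound
  have hlog : L ≤ ∑ t ∈ Finset.range k, 1 / ((p:ℝ) - t) := by
    have htel : ∑ t ∈ Finset.range k,
        (Real.log ((p:ℝ) + 1 - t) - Real.log ((p:ℝ) + 1 - (t+1:ℕ)))
        = Real.log ((p:ℝ) + 1 - (0:ℕ)) - Real.log ((p:ℝ) + 1 - (k:ℕ)) :=
      Finset.sum_range_sub' (fun t : ℕ => Real.log ((p:ℝ) + 1 - t)) k
    have hterm : ∀ t ∈ Finset.range k,
        Real.log ((p:ℝ) + 1 - t) - Real.log ((p:ℝ) + 1 - (t+1:ℕ)) ≤ 1 / ((p:ℝ) - t) := by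
      intro t ht
      rw [Finset.mem_range] at ht
      have htp : t < p := lt_of_lt_of_le ht hkp
      have hb : (0:ℝ) < (p:ℝ) - t := by
        have : (t:ℝ) < (p:ℝ) := by exact_mod_cast htp
        linarith
      have ha : ((p:ℝ) + 1 - (t+1:ℕ)) = (p:ℝ) - t := by push_cast; ring
      have ha2 : (p:ℝ) + 1 - t = ((p:ℝ) - t) + 1 := by ring
      rw [ha]
      have hpos1 : (0:ℝ) < (p:ℝ) + 1 - t := by linarith
      rw [← Real.log_div hpos1.ne' hb.ne']
      have hdivpos : (0:ℝ) < ((p:ℝ) + 1 - t) / ((p:ℝ) - t) := div_pos hpos1 hb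
      have := Real.log_le_sub_one_of_pos hdivpos
      have heq : ((p:ℝ) + 1 - t) / ((p:ℝ) - t) - 1 = 1 / ((p:ℝ) - t) := by
        field_simp
        ring
      linarith [this, heq ▸ this]
    have hbk : (0:ℝ) < (p:ℝ) + 1 - k := by
      have : (k:ℝ) ≤ (p:ℝ) := by exact_mod_cast hkp
      linarith
    have hbp : (0:ℝ) < (p:ℝ) + 1 := by positivity
    have hLeq : L = Real.log ((p:ℝ) + 1 - (0:ℕ)) - Real.log ((p:ℝ) + 1 - (k:ℕ)) := by
      rw [hL, Real.log_div hbp.ne' hbk.ne']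
      norm_num
    rw [hLeq, ← htel]
    exact Finset.sum_le_sum hterm
  have hfinal1 : cc * sInf V * L ≤ f 0 - f k := by
    have h1 : cc * sInf V * L ≤ cc * sInf V * (∑ t ∈ Finset.range k, 1 / ((p:ℝ) - t)) :=
      mul_le_mul_of_nonneg_left hlog (by positivity)
    linarith [hsum_ge]
  -- f 0 bound
  have hf0 : f 0 ≤ lam * (y ⬝ᵥ y) / ν := by
    rw [hfdef 0, le_div_iff₀ hν]
    have h := inv_quad_upper (x := x) (lam := lam) hn0 hlam (S 0) y
    rw [← hνdef] at h
    nlinarith [mul_le_mul_of_nonneg_left h hlam.le,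
      psd_nonneg (ridge_posdef (x := x) (lam := lam) hn0 hlam (S 0)).inv.posSemidef y]
  have hv1 : lam * (y ⬝ᵥ y) ≤ sInf V * (ν + θk) := (div_le_iff₀ hMk).mp hvlb
  have hf0' : f 0 ≤ (ν + θk) / ν * sInf V := by
    rw [div_mul_eq_mul_div, le_div_iff₀ hν]
    have h4 : f 0 * ν ≤ lam * (y ⬝ᵥ y) := (le_div_iff₀ hν).mp hf0
    linarith [hv1]
  -- final algebra
  have hnusq : (n:ℝ) ^ 2 * lam ^ 2 = ν ^ 2 := by rw [hνdef]; ring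
  have hrhseq : (ν + θk) / ν *
      (1 - (n:ℝ) ^ 2 * lam ^ 2 * θl / ((ν + θ1) * (ν + θk) ^ 2) * L) * sInf V
      = (ν + θk) / ν * sInf V - cc * sInf V * L := by
    rw [hnusq, hcc]
    field_simp
  calc vG = f k := by rw [hvG, hfdef k]
    _ ≤ f 0 - cc * sInf V * L := by linarith [hfinal1]
    _ ≤ (ν + θk) / ν * sInf V - cc * sInf V * L := by linarith [hf0']
    _ = (ν + θk) / ν *
        (1 - (n:ℝ) ^ 2 * lam ^ 2 * θl / ((ν + θ1) * (ν + θk) ^ 2) * L) * sInf V :=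
      hrhseq.symm
end
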